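/- Let P(z,t) = a(t)·∏_{j=1}^n (z − λ_j(t)) with distinct roots λ_j(t), and suppose the polarized identity 2Re(a'/a) − ∑_j [k_j·λ_j'/(z−λ_j) + k_j·conj(λ_j')/(ξ−conj(λ_j))] − c(t)·[∑_j k_j/(z−λ_j)]·[∑_j k_j/(ξ−conj(λ_j))] = B(t)·(1 − 1/(P(z,t)·P^#(ξ,t))) holds for all (z, ξ) away from poles. Then λ_j'(t) = 0 for every j, i.e., all roots are stationary. -/

import Mathlib

open Complex Filter

private lemma aux_inv_tendsto (w : ℂ) :
    Filter.Tendsto (fun x : ℝ => ((x : ℂ) - w)⁻¹) Filter.atTop (nhds 0) := by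
  have hb : Tendsto (fun x : ℝ => (x - ‖w‖)⁻¹) atTop (nhds 0) :=
    tendsto_inv_atTop_zero.comp (tendsto_atTop_add_const_right _ _ tendsto_id)
  refine squeeze_zero_norm' ?_ hb
  filter_upwards [eventually_gt_atTop (‖w‖ + 1)] with x hx
  have h1 : (0:ℝ) < x - ‖w‖ := by
    have := norm_nonneg w; linarith
  have h2 : x - ‖w‖ ≤ ‖(x:ℂ) - w‖ := by
    have hx0 : ‖(x:ℂ)‖ = x := by
      rw [Complex.norm_real, Real.norm_eq_abs]
      exact abs_of_pos (by have := norm_nonneg w; linarith)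
    calc x - ‖w‖ = ‖(x:ℂ)‖ - ‖w‖ := by rw [hx0]
      _ ≤ ‖(x:ℂ) - w‖ := norm_sub_norm_le _ _
  rw [norm_inv]
  exact inv_anti₀ h1 h2

/-- If the polarized identity (2.14) of the paper holds for all `(z, ξ)` away from the
poles, then all the roots `λⱼ(t)` are stationary: `λⱼ'(t) = 0`. -/
theorem roots_are_stationary
    (m : ℕ) (a : ℝ → ℂ) (ha : Differentiable ℝ a) (ha0 : ∀ t, a t ≠ 0)
    (lam : Fin m → ℝ → ℂ) (hlam : ∀ j, Differentiable ℝ (lam j))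
    (hdist : ∀ t : ℝ, Function.Injective (fun j => lam j t))
    (k : Fin m → ℕ) (hk : ∀ j, 1 ≤ k j)
    (c B : ℝ → ℝ)
    (hid : ∀ t : ℝ, ∀ z ξ : ℂ, (∀ j, z ≠ lam j t) → (∀ j, ξ ≠ (starRingEnd ℂ) (lam j t)) →
      ((2 * (deriv a t / a t).re : ℝ) : ℂ)
        - (∑ j, ((k j : ℂ) * deriv (fun s => lam j s) t / (z - lam j t)
            + (k j : ℂ) * (starRingEnd ℂ) (deriv (fun s => lam j s) t) /
                (ξ - (starRingEnd ℂ) (lam j t))))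
        - (c t : ℂ) * (∑ j, (k j : ℂ) / (z - lam j t)) *
            (∑ j, (k j : ℂ) / (ξ - (starRingEnd ℂ) (lam j t)))
      = (B t : ℂ) * (1 - 1 /
          ((a t * ∏ j, (z - lam j t) ^ (k j)) *
           ((starRingEnd ℂ) (a t) * ∏ j, (ξ - (starRingEnd ℂ) (lam j t)) ^ (k j))))) :
    ∀ (j : Fin m) (t : ℝ), deriv (fun s => lam j s) t = 0 := by
  intro j t
  set C : ℂ := ((2 * (deriv a t / a t).re : ℝ) : ℂ) with hCdef
  -- Step 1: letting ξ → ∞ along the reals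
  have key : ∀ z : ℂ, (∀ i, z ≠ lam i t) →
      C - ∑ i, (k i : ℂ) * deriv (fun s => lam i s) t / (z - lam i t) = (B t : ℂ) := by
    intro z hz
    set S : ℂ := ∑ i, (k i : ℂ) * deriv (fun s => lam i s) t / (z - lam i t) with hS
    set U : ℂ := ∑ i, (k i : ℂ) / (z - lam i t) with hU
    set P : ℂ := a t * ∏ i, (z - lam i t) ^ (k i) with hP
    -- eventually ξ = x (real, large) avoids all conjugate roots
    have hev : ∀ᶠ x : ℝ in atTop, ∀ i, ((x:ℂ)) ≠ (starRingEnd ℂ) (lam i t) := by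
      have h1 : ∀ᶠ x : ℝ in atTop, ∀ i, ‖lam i t‖ < x := by
        rw [eventually_all]; intro i; exact eventually_gt_atTop _
      filter_upwards [h1] with x hx i hxe
      have h2 : ‖((x:ℂ))‖ = ‖(starRingEnd ℂ) (lam i t)‖ := by rw [hxe]
      rw [Complex.norm_real, Real.norm_eq_abs, RCLike.norm_conj] at h2
      have : |x| < x := h2 ▸ hx i
      exact absurd this (not_lt.2 (le_abs_self x))
    -- the identity holds eventually
    have heq : ∀ᶠ x : ℝ in atTop,
        (C - (∑ i, ((k i : ℂ) * deriv (fun s => lam i s) t / (z - lam i t)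
              + (k i : ℂ) * (starRingEnd ℂ) (deriv (fun s => lam i s) t) /
                  ((x:ℂ) - (starRingEnd ℂ) (lam i t))))
          - (c t : ℂ) * U * (∑ i, (k i : ℂ) / ((x:ℂ) - (starRingEnd ℂ) (lam i t))))
        = (B t : ℂ) * (1 - 1 /
            (P * ((starRingEnd ℂ) (a t) * ∏ i, ((x:ℂ) - (starRingEnd ℂ) (lam i t)) ^ (k i)))) := by
      filter_upwards [hev] with x hx
      exact hid t z x hz hx
    -- limit of the left-hand side
    have hT : Tendsto (fun x : ℝ => ∑ i, ((k i : ℂ) * deriv (fun s => lam i s) t / (z - lam i t)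
              + (k i : ℂ) * (starRingEnd ℂ) (deriv (fun s => lam i s) t) /
                  ((x:ℂ) - (starRingEnd ℂ) (lam i t)))) atTop (nhds S) := by
      have : Tendsto (fun x : ℝ => ∑ i, ((k i : ℂ) * deriv (fun s => lam i s) t / (z - lam i t)
              + (k i : ℂ) * (starRingEnd ℂ) (deriv (fun s => lam i s) t) /
                  ((x:ℂ) - (starRingEnd ℂ) (lam i t)))) atTop
          (nhds (∑ i, ((k i : ℂ) * deriv (fun s => lam i s) t / (z - lam i t)
              + (k i : ℂ) * (starRingEnd ℂ) (deriv (fun s => lam i s) t) * 0))) := by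
        refine tendsto_finset_sum _ (fun i _ => tendsto_const_nhds.add ?_)
        simp only [div_eq_mul_inv]
        exact tendsto_const_nhds.mul (aux_inv_tendsto _)
      simpa using this
    have hV : Tendsto (fun x : ℝ => ∑ i, (k i : ℂ) / ((x:ℂ) - (starRingEnd ℂ) (lam i t)))
        atTop (nhds 0) := by
      have : Tendsto (fun x : ℝ => ∑ i, (k i : ℂ) / ((x:ℂ) - (starRingEnd ℂ) (lam i t)))
          atTop (nhds (∑ i : Fin m, (k i : ℂ) * 0)) := by
        refine tendsto_finset_sum _ (fun i _ => ?_)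
        simp only [div_eq_mul_inv]
        exact tendsto_const_nhds.mul (aux_inv_tendsto _)
      simpa using this
    have hQ : Tendsto (fun x : ℝ => 1 /
        (P * ((starRingEnd ℂ) (a t) * ∏ i, ((x:ℂ) - (starRingEnd ℂ) (lam i t)) ^ (k i))))
        atTop (nhds 0) := by
      have hF : Tendsto (fun x : ℝ => ∏ i, (((x:ℂ) - (starRingEnd ℂ) (lam i t))⁻¹) ^ (k i))
          atTop (nhds (∏ i : Fin m, (0:ℂ) ^ (k i))) := by
        refine tendsto_finset_prod Finset.univ (fun i _ => ?_)
        exact (aux_inv_tendsto ((starRingEnd ℂ) (lam i t))).pow (k i)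
      have hzero : (∏ i : Fin m, (0:ℂ) ^ (k i)) = 0 :=
        Finset.prod_eq_zero (Finset.mem_univ j)
          (zero_pow (by have := hk j; omega))
      rw [hzero] at hF
      have hmain : Tendsto (fun x : ℝ => (P * (starRingEnd ℂ) (a t))⁻¹ *
          ∏ i, (((x:ℂ) - (starRingEnd ℂ) (lam i t))⁻¹) ^ (k i)) atTop (nhds 0) := by
        simpa using tendsto_const_nhds.mul hF
      refine hmain.congr (fun x => ?_)
      simp only [inv_pow]
      rw [Finset.prod_inv_distrib, one_div, mul_inv, mul_inv]
      ring
    have hLHS : Tendsto (fun x : ℝ =>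
        (C - (∑ i, ((k i : ℂ) * deriv (fun s => lam i s) t / (z - lam i t)
              + (k i : ℂ) * (starRingEnd ℂ) (deriv (fun s => lam i s) t) /
                  ((x:ℂ) - (starRingEnd ℂ) (lam i t))))
          - (c t : ℂ) * U * (∑ i, (k i : ℂ) / ((x:ℂ) - (starRingEnd ℂ) (lam i t)))))
        atTop (nhds (C - S)) := by
      have hc1 : Tendsto (fun _ : ℝ => C) atTop (nhds C) := tendsto_const_nhds
      have hc2 : Tendsto (fun _ : ℝ => (c t : ℂ) * U) atTop (nhds ((c t : ℂ) * U)) :=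
        tendsto_const_nhds
      have := (hc1.sub hT).sub (hc2.mul hV)
      simpa [mul_assoc] using this
    have hRHS : Tendsto (fun x : ℝ => (B t : ℂ) * (1 - 1 /
        (P * ((starRingEnd ℂ) (a t) * ∏ i, ((x:ℂ) - (starRingEnd ℂ) (lam i t)) ^ (k i)))))
        atTop (nhds (B t : ℂ)) := by
      have hc1 : Tendsto (fun _ : ℝ => (B t : ℂ)) atTop (nhds (B t : ℂ)) := tendsto_const_nhds
      have hc2 : Tendsto (fun _ : ℝ => (1:ℂ)) atTop (nhds 1) := tendsto_const_nhds
      have := hc1.mul (hc2.sub hQ)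
      simpa using this
    exact tendsto_nhds_unique (hLHS.congr' heq) hRHS
  -- Step 2: letting z → λ_j
  have hne : ∀ i, i ≠ j → lam j t - lam i t ≠ 0 := by
    intro i hij
    refine sub_ne_zero.2 (fun h => hij.symm ?_)
    exact hdist t h
  set D : ℂ := deriv (fun s => lam j s) t with hD
  have h2 : ∀ᶠ ε in nhdsWithin (0:ℂ) {(0:ℂ)}ᶜ, ∀ i, lam j t + ε ≠ lam i t := by
    have hall : ∀ᶠ ε in nhds (0:ℂ), ∀ i ∈ Finset.univ.erase j, lam j t + ε ≠ lam i t := by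
      rw [Filter.eventually_all_finset]
      intro i hi
      have hji : lam j t ≠ lam i t := by
        intro h
        exact (Finset.mem_erase.1 hi).1 (hdist t h).symm
      have hcont : Tendsto (fun ε : ℂ => lam j t + ε) (nhds 0) (nhds (lam j t)) := by
        have hc : Continuous (fun ε : ℂ => lam j t + ε) := continuous_const.add continuous_id; simpa using hc.tendsto (0:ℂ)
      exact hcont.eventually_ne hji
    filter_upwards [hall.filter_mono nhdsWithin_le_nhds, self_mem_nhdsWithin] with ε h1 hε i
    by_cases hij : i = j
    · subst hij
      intro h
      exact hε (by simpa using h)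
    · exact h1 i (Finset.mem_erase.2 ⟨hij, Finset.mem_univ i⟩)
  have heq2 : ∀ᶠ ε in nhdsWithin (0:ℂ) {(0:ℂ)}ᶜ,
      ε * ((C - B t) - ∑ i ∈ Finset.univ.erase j,
        (k i : ℂ) * deriv (fun s => lam i s) t / (lam j t + ε - lam i t))
        = (k j : ℂ) * D := by
    filter_upwards [h2, self_mem_nhdsWithin] with ε hε hε0
    have hεne : ε ≠ 0 := hε0
    have hk2 := key (lam j t + ε) hε
    have hsum : ∑ i, (k i : ℂ) * deriv (fun s => lam i s) t / (lam j t + ε - lam i t)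
        = C - B t := by
      have := hk2
      linear_combination -this
    rw [← Finset.add_sum_erase Finset.univ _ (Finset.mem_univ j)] at hsum
    have hεε : lam j t + ε - lam j t = ε := by ring
    rw [hεε] at hsum
    have hdiv : (k j : ℂ) * D / ε = (C - B t) - ∑ i ∈ Finset.univ.erase j,
        (k i : ℂ) * deriv (fun s => lam i s) t / (lam j t + ε - lam i t) := by
      linear_combination hsum
    rw [← hdiv, mul_comm, div_mul_cancel₀ _ hεne]
  have hlim : Tendsto (fun ε : ℂ => ε * ((C - B t) - ∑ i ∈ Finset.univ.erase j,
        (k i : ℂ) * deriv (fun s => lam i s) t / (lam j t + ε - lam i t)))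
      (nhdsWithin (0:ℂ) {(0:ℂ)}ᶜ) (nhds 0) := by
    have h1 : Tendsto (fun ε : ℂ => ε) (nhdsWithin (0:ℂ) {(0:ℂ)}ᶜ) (nhds 0) :=
      tendsto_id.mono_left nhdsWithin_le_nhds
    have h2t : Tendsto (fun ε : ℂ => (C - B t) - ∑ i ∈ Finset.univ.erase j,
        (k i : ℂ) * deriv (fun s => lam i s) t / (lam j t + ε - lam i t))
        (nhdsWithin (0:ℂ) {(0:ℂ)}ᶜ)
        (nhds ((C - B t) - ∑ i ∈ Finset.univ.erase j,
          (k i : ℂ) * deriv (fun s => lam i s) t / (lam j t - lam i t))) := by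
      refine Tendsto.mono_left ?_ nhdsWithin_le_nhds
      refine tendsto_const_nhds.sub (tendsto_finset_sum _ (fun i hi => ?_))
      have hd : Tendsto (fun ε : ℂ => lam j t + ε - lam i t) (nhds 0)
          (nhds (lam j t - lam i t)) := by
        have : Continuous (fun ε : ℂ => lam j t + ε - lam i t) := by continuity
        simpa using this.tendsto (0:ℂ)
      exact tendsto_const_nhds.div hd (hne i (Finset.mem_erase.1 hi).1)
    simpa using h1.mul h2t
  have hfin : (k j : ℂ) * D = 0 :=
    tendsto_nhds_unique tendsto_const_nhds (Tendsto.congr' heq2 hlim)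
  have hkj : (k j : ℂ) ≠ 0 := Nat.cast_ne_zero.2 (by have := hk j; omega)
  have : D = 0 := by
    rcases mul_eq_zero.1 hfin with h | h
    · exact absurd h hkj
    · exact h
  exact this
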